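/- For every k ≥ 0 and every finite alphabet Σ, every (2k+1)-piecewise testable language over Σ is definable by a TL[#←,#→] formula of depth at most k+1. -/

import Mathlib

mutual
  /-- Formulas of TL[#←,#→]. -/
  inductive TL2Formula (σ : Type) : Type
    | sym : σ → TL2Formula σ
    | lt : TL2Term σ → TL2Term σ → TL2Formula σ
    | not : TL2Formula σ → TL2Formula σ
    | and : TL2Formula σ → TL2Formula σ → TL2Formula σ
  /-- Terms of TL[#←,#→]. -/
  inductive TL2Term (σ : Type) : Type
    | countL : TL2Formula σ → TL2Term σ
    | countR : TL2Formula σ → TL2Term σ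
    | add : TL2Term σ → TL2Term σ → TL2Term σ
    | one : TL2Term σ
end

mutual
  /-- Satisfaction `w,i ⊨ φ` (positions are 0-indexed, `0 ≤ i < |w|`). -/
  def TL2Formula.sat {σ : Type} [DecidableEq σ] : TL2Formula σ → List σ → ℕ → Bool
    | .sym c, w, i => decide (w[i]? = some c)
    | .lt t₁ t₂, w, i => decide (TL2Term.val t₁ w i < TL2Term.val t₂ w i)
    | .not φ, w, i => !(TL2Formula.sat φ w i)
    | .and φ₁ φ₂, w, i => TL2Formula.sat φ₁ w i && TL2Formula.sat φ₂ w i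
  /-- Value `t^{w,i}`: `#←[φ]` counts positions `j ≤ i` satisfying `φ`, and
  `#→[φ]` counts positions `i ≤ j < |w|` satisfying `φ`. -/
  def TL2Term.val {σ : Type} [DecidableEq σ] : TL2Term σ → List σ → ℕ → ℕ
    | .countL φ, w, i => ((List.range (i + 1)).filter (fun j => TL2Formula.sat φ w j)).length
    | .countR φ, w, i =>
        ((List.range w.length).filter (fun j => decide (i ≤ j) && TL2Formula.sat φ w j)).length
    | .add t₁ t₂, w, i => TL2Term.val t₁ w i + TL2Term.val t₂ w i
    | .one, _, _ => 1
end

mutual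
  /-- Nesting depth of `#←`/`#→` in a formula. -/
  def TL2Formula.depth {σ : Type} : TL2Formula σ → ℕ
    | .sym _ => 0
    | .lt t₁ t₂ => max (TL2Term.depth t₁) (TL2Term.depth t₂)
    | .not φ => TL2Formula.depth φ
    | .and φ₁ φ₂ => max (TL2Formula.depth φ₁) (TL2Formula.depth φ₂)
  /-- Nesting depth of `#←`/`#→` in a term. -/
  def TL2Term.depth {σ : Type} : TL2Term σ → ℕ
    | .countL φ => TL2Formula.depth φ + 1
    | .countR φ => TL2Formula.depth φ + 1
    | .add t₁ t₂ => max (TL2Term.depth t₁) (TL2Term.depth t₂)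
    | .one => 0
end

/-- `φ` defines `L`: a nonempty string is in `L` iff `φ` is satisfied at its last position. -/
def TL2Formula.defines {σ : Type} [DecidableEq σ] (φ : TL2Formula σ) (L : Set (List σ)) : Prop :=
  ∀ w : List σ, w ≠ [] → (w ∈ L ↔ φ.sat w (w.length - 1) = true)

/-- The J-expression `Σ* σ₁ Σ* σ₂ Σ* ⋯ Σ* σₘ Σ*` determined by the list `[σ₁, …, σₘ]`. -/
def Jexpr {σ : Type*} : List σ → Language σ
  | [] => ⊤
  | c :: rest => ⊤ * {[c]} * Jexpr rest

/-- Boolean combinations (union, intersection, complement) of a family `G` of sets. -/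
inductive BoolComb {α : Type*} (G : Set (Set α)) : Set α → Prop
  | base {s : Set α} : s ∈ G → BoolComb G s
  | compl {s : Set α} : BoolComb G s → BoolComb G sᶜ
  | union {s t : Set α} : BoolComb G s → BoolComb G t → BoolComb G (s ∪ t)
  | inter {s t : Set α} : BoolComb G s → BoolComb G t → BoolComb G (s ∩ t)

/-- A language is `k`-piecewise testable if it is a Boolean combination of
J-expressions each with at most `k` symbols. -/
def PiecewiseTestable {σ : Type*} (k : ℕ) (L : Language σ) : Prop :=
  BoolComb {M | ∃ l : List σ, l.length ≤ k ∧ M = Jexpr l} L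

namespace TLAux

open List

variable {σ : Type} [DecidableEq σ]

/-- A tautology of depth 0. -/
def tlTrue : TL2Formula σ := .not (.lt .one .one)

/-- Disjunction via De Morgan. -/
def tlOr (φ ψ : TL2Formula σ) : TL2Formula σ := .not (.and (.not φ) (.not ψ))

/-- `t ≥ 1`. -/
def ge1 (t : TL2Term σ) : TL2Formula σ := .lt .one (.add t .one)

/-- `t ≥ 2`. -/
def ge2 (t : TL2Term σ) : TL2Formula σ := .lt .one t

/-- `∃ j < i, ψ(j)`. -/
def existsBefore (ψ : TL2Formula σ) : TL2Formula σ :=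
  tlOr (ge2 (.countL ψ)) ((ge1 (.countL ψ)).and ψ.not)

/-- `∃ j, i < j < |w|, ψ(j)`. -/
def existsAfter (ψ : TL2Formula σ) : TL2Formula σ :=
  tlOr (ge2 (.countR ψ)) ((ge1 (.countR ψ)).and ψ.not)

/-- `beforeR r` holds at `i` iff `r.reverse` is a sublist of `w.take i`. -/
def beforeR : List σ → TL2Formula σ
  | [] => tlTrue
  | c :: r => existsBefore ((TL2Formula.sym c).and (beforeR r))

/-- `after v` holds at `i` iff `v` is a sublist of `w.drop (i+1)`. -/
def after : List σ → TL2Formula σ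
  | [] => tlTrue
  | c :: v => existsAfter ((TL2Formula.sym c).and (after v))


lemma depth_sym (c : σ) : (TL2Formula.sym c).depth = 0 := rfl
lemma depth_lt (t₁ t₂ : TL2Term σ) : (TL2Formula.lt t₁ t₂).depth = max t₁.depth t₂.depth := rfl
lemma depth_not (φ : TL2Formula σ) : φ.not.depth = φ.depth := rfl
lemma depth_and (φ ψ : TL2Formula σ) : (φ.and ψ).depth = max φ.depth ψ.depth := rfl
lemma depth_countL (φ : TL2Formula σ) : (TL2Term.countL φ).depth = φ.depth + 1 := rfl
lemma depth_countR (φ : TL2Formula σ) : (TL2Term.countR φ).depth = φ.depth + 1 := rfl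
lemma depth_add (t₁ t₂ : TL2Term σ) : (t₁.add t₂).depth = max t₁.depth t₂.depth := rfl
lemma depth_one : (TL2Term.one : TL2Term σ).depth = 0 := rfl

lemma depth_tlTrue : (tlTrue : TL2Formula σ).depth = 0 := rfl

lemma depth_tlOr (φ ψ : TL2Formula σ) : (tlOr φ ψ).depth = max φ.depth ψ.depth := rfl

lemma depth_existsBefore (ψ : TL2Formula σ) : (existsBefore ψ).depth = ψ.depth + 1 := by
  simp only [existsBefore, tlOr, ge1, ge2, depth_sym, depth_lt, depth_not, depth_and, depth_countL, depth_countR, depth_add, depth_one]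
  omega

lemma depth_existsAfter (ψ : TL2Formula σ) : (existsAfter ψ).depth = ψ.depth + 1 := by
  simp only [existsAfter, tlOr, ge1, ge2, depth_sym, depth_lt, depth_not, depth_and, depth_countL, depth_countR, depth_add, depth_one]
  omega

lemma depth_beforeR (r : List σ) : (beforeR r).depth ≤ r.length := by
  induction r with
  | nil => simp [beforeR, depth_tlTrue]
  | cons c r ih =>
    simp only [beforeR, depth_existsBefore, depth_sym, depth_lt, depth_not, depth_and, depth_countL, depth_countR, depth_add, depth_one, length_cons]
    omega

lemma depth_after (v : List σ) : (after v).depth ≤ v.length := by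
  induction v with
  | nil => simp [after, depth_tlTrue]
  | cons c v ih =>
    simp only [after, depth_existsAfter, depth_sym, depth_lt, depth_not, depth_and, depth_countL, depth_countR, depth_add, depth_one, length_cons]
    omega

lemma sat_tlTrue (w : List σ) (i : ℕ) : (tlTrue : TL2Formula σ).sat w i = true := by
  simp [tlTrue, TL2Formula.sat, TL2Term.val]

lemma sat_tlOr (φ ψ : TL2Formula σ) (w : List σ) (i : ℕ) :
    (tlOr φ ψ).sat w i = (φ.sat w i || ψ.sat w i) := by
  simp [tlOr, TL2Formula.sat]

lemma exists_lt_iff_pos (p : ℕ → Bool) (n : ℕ) :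
    0 < ((range n).filter p).length ↔ ∃ j, j < n ∧ p j = true := by
  rw [length_pos_iff_exists_mem]
  constructor
  · rintro ⟨a, ha⟩
    rw [mem_filter, mem_range] at ha
    exact ⟨a, ha.1, ha.2⟩
  · rintro ⟨j, hj, hp⟩
    exact ⟨j, by rw [mem_filter, mem_range]; exact ⟨hj, hp⟩⟩

lemma pos_iff_exists' (p : ℕ → Bool) (n : ℕ) :
    (1 < ((range n).filter p).length + 1) ↔ ∃ j, j < n ∧ p j = true := by
  rw [← exists_lt_iff_pos p n]; omega

lemma countL_cond (p : ℕ → Bool) (i : ℕ) :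
    (1 < ((range (i+1)).filter p).length ∨
      (0 < ((range (i+1)).filter p).length ∧ p i = false)) ↔ ∃ j, j < i ∧ p j = true := by
  rw [← exists_lt_iff_pos p i, range_succ, filter_append, length_append]
  cases hp : p i <;> simp [List.filter, hp] <;> intro h <;> exact (exists_lt_iff_pos p i).mp (by omega)

lemma countR_cond (p : ℕ → Bool) (i n : ℕ) :
    (1 < ((range n).filter (fun j => decide (i ≤ j) && p j)).length ∨
      (0 < ((range n).filter (fun j => decide (i ≤ j) && p j)).length ∧ p i = false)) ↔
      ∃ j, i < j ∧ j < n ∧ p j = true := by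
  rcases le_or_gt n i with h | h
  · have hnil : (range n).filter (fun j => decide (i ≤ j) && p j) = [] := by
      rw [filter_eq_nil_iff]
      intro a ha
      simp only [mem_range] at ha
      simp only [Bool.and_eq_true, decide_eq_true_eq, not_and]
      omega
    rw [hnil]
    constructor
    · rintro (h' | ⟨h', -⟩) <;> simp at h'
    · rintro ⟨j, hj1, hj2, -⟩; omega
  · have hn : range n = range (i+1) ++ map (fun x => (i+1) + x) (range (n - i - 1)) := by
      rw [← range_add]; congr 1; omega
    rw [hn, filter_append, length_append, filter_map, length_map]
    have h1 : ((range (i+1)).filter (fun j => decide (i ≤ j) && p j)).length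
        = if p i = true then 1 else 0 := by
      rw [range_succ, filter_append, length_append]
      have h2 : (range i).filter (fun j => decide (i ≤ j) && p j) = [] := by
        rw [filter_eq_nil_iff]
        intro a ha
        simp only [mem_range] at ha
        simp only [Bool.and_eq_true, decide_eq_true_eq, not_and]
        omega
      rw [h2]
      cases hp : p i <;> simp [List.filter, hp]
    have h3 : (range (n - i - 1)).filter ((fun j => decide (i ≤ j) && p j) ∘ (fun x => (i+1) + x))
        = (range (n - i - 1)).filter (fun x => p ((i+1) + x)) := by
      apply filter_congr
      intro x hx
      simp only [Function.comp]
      have : i ≤ (i+1) + x := by omega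
      simp [this]
    rw [h1, h3]
    have h4 : (∃ j, i < j ∧ j < n ∧ p j = true) ↔
        ∃ x, x < n - i - 1 ∧ p ((i+1) + x) = true := by
      constructor
      · rintro ⟨j, hj1, hj2, hj3⟩
        refine ⟨j - (i+1), by omega, ?_⟩
        have he : (i+1) + (j - (i+1)) = j := by omega
        rw [he]; exact hj3
      · rintro ⟨x, hx1, hx2⟩
        exact ⟨(i+1) + x, by omega, by omega, hx2⟩
    rw [h4, ← exists_lt_iff_pos (fun x => p ((i+1) + x)) (n - i - 1)]
    cases hp : p i <;> simp [hp] <;> intro h <;>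
      exact (exists_lt_iff_pos (fun x => p ((i+1) + x)) (n - i - 1)).mp (by omega)

lemma sat_existsBefore (ψ : TL2Formula σ) (w : List σ) (i : ℕ) :
    (existsBefore ψ).sat w i = true ↔ ∃ j, j < i ∧ ψ.sat w j = true := by
  rw [← countL_cond (fun j => ψ.sat w j) i]
  simp only [existsBefore, sat_tlOr, ge1, ge2, TL2Formula.sat, Bool.or_eq_true, Bool.and_eq_true,
    decide_eq_true_eq]
  simp only [existsBefore, sat_tlOr, ge1, ge2, TL2Formula.sat, TL2Term.val, Bool.or_eq_true,
    Bool.and_eq_true, decide_eq_true_eq, Bool.not_eq_true']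
  cases hs : ψ.sat w i <;> simp [hs] <;> omega

lemma sat_existsAfter (ψ : TL2Formula σ) (w : List σ) (i : ℕ) :
    (existsAfter ψ).sat w i = true ↔ ∃ j, i < j ∧ j < w.length ∧ ψ.sat w j = true := by
  rw [← countR_cond (fun j => ψ.sat w j) i w.length]
  simp only [existsAfter, sat_tlOr, ge1, ge2, TL2Formula.sat, Bool.or_eq_true, Bool.and_eq_true,
    decide_eq_true_eq]
  simp only [existsAfter, sat_tlOr, ge1, ge2, TL2Formula.sat, TL2Term.val, Bool.or_eq_true,
    Bool.and_eq_true, decide_eq_true_eq, Bool.not_eq_true']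
  cases hs : ψ.sat w i <;> simp [hs] <;> omega

/-- Decomposition of a sublist containing a distinguished middle letter. -/
lemma sublist_mid_iff {α : Type} (u v x : List α) (c : α) :
    (u ++ c :: v).Sublist x ↔
      ∃ j, j < x.length ∧ x[j]? = some c ∧ u.Sublist (x.take j) ∧ v.Sublist (x.drop (j+1)) := by
  constructor
  · intro h
    induction x generalizing u with
    | nil => simp at h
    | cons d x' ih =>
      cases u with
      | nil =>
        simp only [nil_append] at h
        cases h with
        | cons _ h' =>
          obtain ⟨j, hj, hc, hu, hv⟩ := ih [] h'
          exact ⟨j+1, by simpa using Nat.succ_lt_succ hj, by simpa using hc,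
            nil_sublist _, by simpa using hv⟩
        | cons_cons _ h' =>
          exact ⟨0, by simp, by simp, nil_sublist _, by simpa using h'⟩
      | cons a u' =>
        simp only [cons_append] at h
        cases h with
        | cons _ h' =>
          have h'' : ((a :: u') ++ c :: v).Sublist x' := by simpa using h'
          obtain ⟨j, hj, hc, hu, hv⟩ := ih (a :: u') h''
          exact ⟨j+1, by simpa using Nat.succ_lt_succ hj, by simpa using hc,
            by simpa using hu.cons d, by simpa using hv⟩
        | cons_cons _ h' =>
          obtain ⟨j, hj, hc, hu, hv⟩ := ih u' h'
          exact ⟨j+1, by simpa using Nat.succ_lt_succ hj, by simpa using hc,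
            by simpa using hu, by simpa using hv⟩
  · rintro ⟨j, hj, hc, hu, hv⟩
    obtain ⟨hj', hcc⟩ := List.getElem?_eq_some_iff.mp hc
    have hx : x = x.take j ++ c :: x.drop (j+1) := by
      conv_lhs => rw [← take_append_drop j x, drop_eq_getElem_cons hj', hcc]
    rw [hx]
    exact hu.append (hv.cons₂ c)

lemma sat_beforeR (r : List σ) (w : List σ) (i : ℕ) :
    (beforeR r).sat w i = true ↔ r.reverse.Sublist (w.take i) := by
  induction r generalizing i with
  | nil => simp [beforeR, sat_tlTrue]
  | cons c r' ih =>
    rw [show beforeR (c :: r') = existsBefore ((TL2Formula.sym c).and (beforeR r')) from rfl,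
      sat_existsBefore, reverse_cons, sublist_mid_iff _ [] _ c]
    simp only [TL2Formula.sat, Bool.and_eq_true, decide_eq_true_eq]
    constructor
    · rintro ⟨j, hji, hc, hb⟩
      obtain ⟨hjw, -⟩ := List.getElem?_eq_some_iff.mp hc
      refine ⟨j, ?_, ?_, ?_, nil_sublist _⟩
      · rw [length_take]; omega
      · rw [getElem?_take, if_pos hji]; exact hc
      · rw [take_take, Nat.min_eq_left (le_of_lt hji)]
        exact (ih j).mp hb
    · rintro ⟨j, hj, hc, hu, -⟩
      rw [length_take] at hj
      have hji : j < i := lt_of_lt_of_le hj (min_le_left _ _)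
      rw [getElem?_take, if_pos hji] at hc
      refine ⟨j, hji, hc, (ih j).mpr ?_⟩
      rwa [take_take, Nat.min_eq_left (le_of_lt hji)] at hu

lemma sat_after (v : List σ) (w : List σ) (i : ℕ) :
    (after v).sat w i = true ↔ v.Sublist (w.drop (i+1)) := by
  induction v generalizing i with
  | nil => simp [after, sat_tlTrue]
  | cons c v' ih =>
    rw [show after (c :: v') = existsAfter ((TL2Formula.sym c).and (after v')) from rfl,
      sat_existsAfter, show c :: v' = [] ++ c :: v' from rfl, sublist_mid_iff]
    simp only [TL2Formula.sat, Bool.and_eq_true, decide_eq_true_eq]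
    constructor
    · rintro ⟨j, hij, hjw, hc, hb⟩
      refine ⟨j - (i+1), ?_, ?_, nil_sublist _, ?_⟩
      · rw [length_drop]; omega
      · rw [getElem?_drop]
        have he : i + 1 + (j - (i+1)) = j := by omega
        rw [he]; exact hc
      · rw [drop_drop]
        have he : i + 1 + (j - (i+1) + 1) = j + 1 := by omega
        rw [he]
        exact (ih j).mp hb
    · rintro ⟨j, hj, hc, -, hv⟩
      rw [length_drop] at hj
      rw [getElem?_drop] at hc
      rw [drop_drop] at hv
      refine ⟨i + 1 + j, by omega, by omega, hc, (ih (i+1+j)).mpr ?_⟩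
      have he : i + 1 + (j + 1) = i + 1 + j + 1 := by omega
      rwa [he] at hv

lemma mem_Jexpr {α : Type} (l : List α) (w : List α) : w ∈ Jexpr l ↔ l.Sublist w := by
  induction l generalizing w with
  | nil =>
    simp only [Jexpr]
    constructor
    · intro _; exact nil_sublist w
    · intro _; trivial
  | cons c rest ih =>
    simp only [Jexpr]
    rw [Language.mem_mul]
    constructor
    · rintro ⟨a, ha, b, hb, rfl⟩
      rw [Language.mem_mul] at ha
      obtain ⟨a1, -, a2, ha2, rfl⟩ := ha
      replace ha2 : a2 = [c] := ha2
      subst ha2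
      have h1 : (c :: rest).Sublist ([c] ++ b) := ((ih b).mp hb).cons₂ c
      have h2 : ([c] ++ b).Sublist (a1 ++ ([c] ++ b)) := sublist_append_right _ _
      rw [append_assoc]
      exact h1.trans h2
    · intro h
      rw [show c :: rest = [] ++ c :: rest from rfl, sublist_mid_iff] at h
      obtain ⟨j, hj, hc, -, hv⟩ := h
      obtain ⟨hj', hcc⟩ := List.getElem?_eq_some_iff.mp hc
      refine ⟨w.take j ++ [c], ?_, w.drop (j+1), (ih _).mpr hv, ?_⟩
      · rw [Language.mem_mul]
        exact ⟨w.take j, trivial, [c], rfl, rfl⟩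
      · rw [append_assoc, singleton_append, ← hcc, ← drop_eq_getElem_cons hj',
          take_append_drop]

lemma jexpr_definable (k : ℕ) (l : List σ) (hl : l.length ≤ 2*k+1) :
    ∃ φ : TL2Formula σ, φ.depth ≤ k + 1 ∧ φ.defines (Jexpr l) := by
  cases l with
  | nil =>
    refine ⟨tlTrue, by simp [depth_tlTrue], fun w hw => ?_⟩
    erw [mem_Jexpr, sat_tlTrue]
    simp
  | cons c0 l0 =>
    set a := min k l0.length with hadef
    have ha : a < (c0 :: l0).length := by simp only [length_cons]; omega
    set u := (c0 :: l0).take a with hu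
    set c := (c0 :: l0)[a] with hc
    set v := (c0 :: l0).drop (a+1) with hv
    have hsplit : c0 :: l0 = u ++ c :: v := by
      conv_lhs => rw [← take_append_drop a (c0 :: l0), drop_eq_getElem_cons ha]
    have hlu : u.length ≤ k := by
      rw [hu, length_take]; omega
    have hlv : v.length ≤ k := by
      rw [hv, length_drop]; simp only [length_cons] at hl ⊢; omega
    refine ⟨ge1 (.countL ((TL2Formula.sym c).and ((beforeR u.reverse).and (after v)))),
      ?_, fun w hw => ?_⟩
    · have hb := depth_beforeR (σ := σ) u.reverse
      have haf := depth_after (σ := σ) v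
      rw [length_reverse] at hb
      simp only [ge1, depth_sym, depth_lt, depth_not, depth_and, depth_countL, depth_countR, depth_add, depth_one]
      omega
    · have hwlen : w.length ≠ 0 := by simpa [length_eq_zero_iff] using hw
      erw [mem_Jexpr, hsplit, sublist_mid_iff]
      simp only [ge1, TL2Formula.sat, decide_eq_true_eq]
      simp only [ge1, TL2Formula.sat, TL2Term.val, decide_eq_true_eq]
      have hn : w.length - 1 + 1 = w.length := by omega
      rw [hn, pos_iff_exists']
      simp only [TL2Formula.sat, Bool.and_eq_true, decide_eq_true_eq, sat_beforeR, sat_after,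
        reverse_reverse]

end TLAux

/-- Every `(2k+1)`-piecewise testable language over a finite alphabet is definable
by a TL[#←,#→] formula of depth at most `k+1`. -/
theorem stmt2 (σ : Type) [Fintype σ] [DecidableEq σ] (k : ℕ) (L : Language σ)
    (hL : PiecewiseTestable (2 * k + 1) L) :
    ∃ φ : TL2Formula σ, φ.depth ≤ k + 1 ∧ φ.defines L := by
  induction hL with
  | base h =>
    obtain ⟨l, hlen, rfl⟩ := h
    exact TLAux.jexpr_definable k l hlen
  | compl _ ih =>
    obtain ⟨φ, hd, hdef⟩ := ih
    refine ⟨φ.not, by simpa [TL2Formula.depth] using hd, fun w hw => ?_⟩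
    have := hdef w hw
    simp only [TL2Formula.sat, Bool.not_eq_true', Set.mem_compl_iff]
    rw [this]
    simp
  | union _ _ ih1 ih2 =>
    obtain ⟨φ, hd1, hdef1⟩ := ih1
    obtain ⟨ψ, hd2, hdef2⟩ := ih2
    refine ⟨TLAux.tlOr φ ψ, ?_, fun w hw => ?_⟩
    · rw [TLAux.depth_tlOr]; omega
    · rw [Set.mem_union, hdef1 w hw, hdef2 w hw, TLAux.sat_tlOr, Bool.or_eq_true]
  | inter _ _ ih1 ih2 =>
    obtain ⟨φ, hd1, hdef1⟩ := ih1
    obtain ⟨ψ, hd2, hdef2⟩ := ih2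
    refine ⟨φ.and ψ, ?_, fun w hw => ?_⟩
    · simp only [TL2Formula.depth]; omega
    · rw [Set.mem_inter_iff, hdef1 w hw, hdef2 w hw]
      simp [TL2Formula.sat]
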